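/- Let A be a real symmetric n×n matrix with spectral decomposition A = Σ_{i=1}^{n} λᵢ vᵢvᵢᵀ, where λ₁ ≥ … ≥ λₙ and v₁,…,vₙ is an orthonormal basis of eigenvectors. Let x be a nonzero vector in ℝⁿ, and set cᵢ = vᵢᵀx/‖x‖₂ and μᵢ = λᵢ/‖A‖_F. Then cos(A, xxᵀ) = Σ_{i=1}^{n} μᵢ cᵢ², and cos(A, xxᵀ) ≤ μ₁c₁² + √(1 − μ₁²)·(1 − c₁²). -/

import Mathlib

open Matrix Polynomial BigOperators

/-- The Frobenius norm of a real matrix. -/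
noncomputable def frob {m : Type*} [Fintype m] (A : Matrix m m ℝ) : ℝ :=
  Real.sqrt (∑ i, ∑ j, (A i j) ^ 2)

/-- The Euclidean norm of a real vector. -/
noncomputable def nrm {m : Type*} [Fintype m] (v : m → ℝ) : ℝ :=
  Real.sqrt (∑ i, (v i) ^ 2)

private lemma swap4 {n : ℕ} (f : Fin n → Fin n → Fin n → Fin n → ℝ) :
    ∑ i, ∑ j, ∑ k, ∑ l, f i j k l = ∑ k, ∑ l, ∑ i, ∑ j, f i j k l := by
  have h1 : ∀ g : Fin n → Fin n → ℝ, ∑ i, ∑ j, g i j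
      = ∑ p : Fin n × Fin n, g p.1 p.2 := by
    intro g
    rw [← Finset.univ_product_univ, Finset.sum_product]
  calc ∑ i, ∑ j, ∑ k, ∑ l, f i j k l
      = ∑ p : Fin n × Fin n, ∑ q : Fin n × Fin n, f p.1 p.2 q.1 q.2 := by
        rw [h1 fun i j => ∑ k, ∑ l, f i j k l]
        exact Finset.sum_congr rfl fun p _ => h1 fun k l => f p.1 p.2 k l
    _ = ∑ q : Fin n × Fin n, ∑ p : Fin n × Fin n, f p.1 p.2 q.1 q.2 :=
        Finset.sum_comm
    _ = ∑ k, ∑ l, ∑ i, ∑ j, f i j k l := by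
        rw [h1 fun k l => ∑ i, ∑ j, f i j k l]
        exact Finset.sum_congr rfl fun q _ => (h1 fun i j => f i j q.1 q.2).symm

/-- with the spectral decomposition `A = Σᵢ λᵢ vᵢvᵢᵀ`, `cᵢ = vᵢᵀx/‖x‖` and
`μᵢ = λᵢ/‖A‖_F`, we have `cos(A, xxᵀ) = Σᵢ μᵢcᵢ²` and
`cos(A, xxᵀ) ≤ μ₁c₁² + √(1 - μ₁²)(1 - c₁²)`. -/
theorem cos_spectral_expansion_and_bound
    (n : ℕ) (hn : 0 < n) (A : Matrix (Fin n) (Fin n) ℝ)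
    (lam : Fin n → ℝ) (hmono : Antitone lam)
    (v : Fin n → Fin n → ℝ)
    (horth : ∀ i j, v i ⬝ᵥ v j = if i = j then (1 : ℝ) else 0)
    (hdecomp : A = ∑ i, lam i • vecMulVec (v i) (v i))
    (x : Fin n → ℝ) (hx : x ≠ 0)
    (c : Fin n → ℝ) (hc : ∀ i, c i = (v i ⬝ᵥ x) / nrm x)
    (μ : Fin n → ℝ) (hμ : ∀ i, μ i = lam i / frob A) :
    (x ⬝ᵥ A.mulVec x) / ((x ⬝ᵥ x) * frob A) = ∑ i, μ i * (c i) ^ 2 ∧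
      (x ⬝ᵥ A.mulVec x) / ((x ⬝ᵥ x) * frob A)
        ≤ μ ⟨0, hn⟩ * (c ⟨0, hn⟩) ^ 2
          + Real.sqrt (1 - (μ ⟨0, hn⟩) ^ 2) * (1 - (c ⟨0, hn⟩) ^ 2) := by
  set i0 : Fin n := ⟨0, hn⟩
  set w : Fin n → ℝ := fun k => v k ⬝ᵥ x with hw
  -- positivity of x ⬝ᵥ x
  have hxxnn : (0:ℝ) ≤ x ⬝ᵥ x := Finset.sum_nonneg fun i _ => mul_self_nonneg _
  have hxxpos : (0:ℝ) < x ⬝ᵥ x := by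
    rcases hxxnn.lt_or_eq with h | h
    · exact h
    · exact absurd (dotProduct_self_eq_zero.mp h.symm) hx
  have hnrm2 : (nrm x) ^ 2 = x ⬝ᵥ x := by
    rw [nrm, Real.sq_sqrt (Finset.sum_nonneg fun i _ => sq_nonneg _)]
    simp [dotProduct, sq]
  -- entries of A
  have hAij : ∀ i j, A i j = ∑ k, lam k * v k i * v k j := by
    intro i j
    rw [hdecomp]
    simp [Matrix.sum_apply, vecMulVec_apply, mul_assoc]
  -- Parseval
  have hParseval : ∑ k, (w k) ^ 2 = x ⬝ᵥ x := by
    set V : Matrix (Fin n) (Fin n) ℝ := Matrix.of v with hV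
    have h1 : V * Vᵀ = 1 := by
      ext i j
      simp [Matrix.mul_apply, Matrix.one_apply, ← horth i j, dotProduct, hV]
    have h2 : Vᵀ * V = 1 := mul_eq_one_comm.mp h1
    have e1 : ∑ k, (w k) ^ 2 = (V *ᵥ x) ⬝ᵥ (V *ᵥ x) := by
      simp [hw, dotProduct, Matrix.mulVec, sq, hV]
    rw [e1, Matrix.dotProduct_mulVec, ← Matrix.vecMul_transpose, Matrix.vecMul_vecMul, h2,
      Matrix.vecMul_one]
  -- quadratic form
  have hAx : ∀ i, A.mulVec x i = ∑ k, lam k * w k * v k i := by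
    intro i
    have h0 : A.mulVec x i = ∑ j, A i j * x j := rfl
    rw [h0]
    have e : ∀ j, A i j * x j = ∑ k, (lam k * (v k j * x j)) * v k i := by
      intro j; rw [hAij, Finset.sum_mul]
      exact Finset.sum_congr rfl fun k _ => by ring
    simp only [e]
    rw [Finset.sum_comm]
    refine Finset.sum_congr rfl fun k _ => ?_
    have hwk : w k = ∑ j, v k j * x j := rfl
    rw [hwk, Finset.mul_sum, Finset.sum_mul]
  have hquad : x ⬝ᵥ A.mulVec x = ∑ k, lam k * (w k) ^ 2 := by
    have h0 : x ⬝ᵥ A.mulVec x = ∑ i, x i * A.mulVec x i := rfl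
    rw [h0]
    have e : ∀ i, x i * A.mulVec x i = ∑ k, (lam k * w k) * (v k i * x i) := by
      intro i; rw [hAx i, Finset.mul_sum]
      exact Finset.sum_congr rfl fun k _ => by ring
    simp only [e]
    rw [Finset.sum_comm]
    refine Finset.sum_congr rfl fun k _ => ?_
    have hwk : w k = ∑ i, v k i * x i := rfl
    rw [← Finset.mul_sum, ← hwk, sq]
    ring
  -- Frobenius norm squared
  have hfrob2 : (frob A) ^ 2 = ∑ k, (lam k) ^ 2 := by
    rw [frob, Real.sq_sqrt (Finset.sum_nonneg fun i _ =>
      Finset.sum_nonneg fun j _ => sq_nonneg (A i j))]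
    have e : ∀ i j : Fin n, (A i j) ^ 2
        = ∑ k, ∑ l, (lam k * v k i * v k j) * (lam l * v l i * v l j) := by
      intro i j
      rw [hAij, sq, Finset.sum_mul_sum]
    simp only [e]
    rw [swap4]
    have e2 : ∀ k l : Fin n,
        ∑ i, ∑ j, (lam k * v k i * v k j) * (lam l * v l i * v l j)
        = (lam k * lam l) * ((v k ⬝ᵥ v l) * (v k ⬝ᵥ v l)) := by
      intro k l
      have hd : v k ⬝ᵥ v l = ∑ i, v k i * v l i := rfl
      rw [hd, Finset.sum_mul_sum, Finset.mul_sum]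
      refine Finset.sum_congr rfl fun i _ => ?_
      rw [Finset.mul_sum]
      exact Finset.sum_congr rfl fun j _ => by ring
    simp only [e2, horth]
    refine Finset.sum_congr rfl fun k _ => ?_
    rw [Finset.sum_eq_single k]
    · simp [sq]
    · intro l _ hlk; simp [Ne.symm hlk]
    · simp
  have hF0 : (0:ℝ) ≤ frob A := Real.sqrt_nonneg _
  have hc2 : ∀ k, c k ^ 2 = (w k) ^ 2 / (x ⬝ᵥ x) := by
    intro k; rw [hc k, div_pow, hnrm2]
  have hcsum : ∑ k, c k ^ 2 = 1 := by
    simp only [hc2]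
    rw [← Finset.sum_div, hParseval, div_self hxxpos.ne']
  have part1 : (x ⬝ᵥ A.mulVec x) / ((x ⬝ᵥ x) * frob A) = ∑ i, μ i * c i ^ 2 := by
    rw [hquad, Finset.sum_div]
    refine Finset.sum_congr rfl fun k _ => ?_
    rw [hμ k, hc2 k, div_mul_div_comm, mul_comm (frob A) (x ⬝ᵥ x)]
  refine ⟨part1, ?_⟩
  rw [part1]
  have hmem : i0 ∈ Finset.univ := Finset.mem_univ i0
  rw [← Finset.add_sum_erase _ (fun i => μ i * c i ^ 2) hmem]
  refine add_le_add_right ?_ _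
  have hμ2 : ∑ k, μ k ^ 2 ≤ 1 := by
    by_cases hF : frob A = 0
    · simp [hμ, hF]
    · have e : ∑ k, μ k ^ 2 = (∑ k, lam k ^ 2) / (frob A) ^ 2 := by
        simp only [hμ, div_pow]; rw [Finset.sum_div]
      rw [e, ← hfrob2, div_self (pow_ne_zero 2 hF)]
  have herμ : ∑ k ∈ Finset.univ.erase i0, μ k ^ 2 ≤ 1 - μ i0 ^ 2 := by
    have h := Finset.sum_erase_add Finset.univ (fun k => μ k ^ 2) hmem
    linarith
  have herc : ∑ k ∈ Finset.univ.erase i0, c k ^ 2 = 1 - c i0 ^ 2 := by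
    have h := Finset.sum_erase_add Finset.univ (fun k => c k ^ 2) hmem
    linarith
  have hCS := Real.sum_mul_le_sqrt_mul_sqrt (Finset.univ.erase i0) μ (fun k => c k ^ 2)
  refine hCS.trans ?_
  have h1 : Real.sqrt (∑ k ∈ Finset.univ.erase i0, μ k ^ 2)
      ≤ Real.sqrt (1 - μ i0 ^ 2) := Real.sqrt_le_sqrt herμ
  have h2 : Real.sqrt (∑ k ∈ Finset.univ.erase i0, (c k ^ 2) ^ 2) ≤ 1 - c i0 ^ 2 := by
    have hle : ∑ k ∈ Finset.univ.erase i0, (c k ^ 2) ^ 2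
        ≤ (∑ k ∈ Finset.univ.erase i0, c k ^ 2) ^ 2 :=
      Finset.sum_sq_le_sq_sum_of_nonneg fun i _ => sq_nonneg _
    have h := Real.sqrt_le_sqrt hle
    rwa [Real.sqrt_sq (Finset.sum_nonneg fun i _ => sq_nonneg _), herc] at h
  exact mul_le_mul h1 h2 (Real.sqrt_nonneg _) (Real.sqrt_nonneg _)
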